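/- Let A ∈ Rⁿˣⁿ satisfy AᵀP + PA = −Q with P positive diagonal and Q positive definite, and let x* ∈ Rⁿ₊₊ satisfy r + Ax* = 0. Along solutions of the disturbed GLV system ẋ = diag(x)(r + Ax + d(t)) with ‖d(t)‖ ≤ α, the Lyapunov function V(x) = 2 Σᵢ pᵢ(xᵢ − x*ᵢ − x*ᵢ log(xᵢ/x*ᵢ)) satisfies V̇ ≤ −q_min ‖x − x*‖² + 2 p_max ‖x − x*‖ α, where q_min is the smallest eigenvalue of Q and p_max the largest diagonal entry of P. In particular V̇ < 0 whenever ‖x − x*‖ > 2 p_max α / q_min. -/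

import Mathlib

open Matrix

/-- Robustness to bounded disturbances in the growth rates: with
`AᵀP + PA = −Q`, `P = diag p` positive, `q_min` the smallest eigenvalue of `Q`
(so `q_min ‖v‖² ≤ vᵀQv`), `p_max` the largest diagonal entry of `P`, interior
equilibrium `x*`, and disturbance `‖d(t)‖ ≤ α`, the derivative of
`V(x) = 2 Σᵢ pᵢ(xᵢ − x*ᵢ − x*ᵢ log(xᵢ/x*ᵢ))` along solutions of
`ẋ = diag(x)(r + Ax + d(t))` satisfies
`V̇ ≤ −q_min ‖x − x*‖² + 2 p_max ‖x − x*‖ α`, hence `V̇ < 0` whenever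
`‖x − x*‖ > 2 p_max α / q_min`. -/
theorem glv_disturbed_lyapunov_bound {n : ℕ} [NeZero n]
    (A : Matrix (Fin n) (Fin n) ℝ) (r : Fin n → ℝ)
    (p : Fin n → ℝ) (hp : ∀ i, 0 < p i)
    (qmin : ℝ) (hqmin : 0 < qmin)
    (hQ : ∀ v : Fin n → ℝ,
      qmin * ∑ i, (v i) ^ 2 ≤
        v ⬝ᵥ ((-(Aᵀ * Matrix.diagonal p + Matrix.diagonal p * A)).mulVec v))
    (xs : Fin n → ℝ) (hxs : ∀ i, 0 < xs i) (heq : r + A.mulVec xs = 0)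
    (x : ℝ → Fin n → ℝ) (hxpos : ∀ t i, 0 < x t i)
    (d : ℝ → Fin n → ℝ) (αd : ℝ)
    (hd : ∀ t, Real.sqrt (∑ i, (d t i) ^ 2) ≤ αd)
    (hode : ∀ t i, HasDerivAt (fun s => x s i)
      (x t i * (r i + ∑ j, A i j * x t j + d t i)) t) :
    let pmax := Finset.univ.sup' Finset.univ_nonempty p
    let V : (Fin n → ℝ) → ℝ :=
      fun y => 2 * ∑ i, p i * (y i - xs i - xs i * Real.log (y i / xs i))
    let e : ℝ → ℝ := fun t => Real.sqrt (∑ i, (x t i - xs i) ^ 2)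
    ∀ t D, HasDerivAt (fun s => V (x s)) D t →
      D ≤ -qmin * (e t) ^ 2 + 2 * pmax * e t * αd ∧
      (e t > 2 * pmax * αd / qmin → D < 0) := by
  intro pmax V e t D hD
  set v : Fin n → ℝ := fun i => x t i - xs i with hv
  -- compute the derivative explicitly
  have hV' : HasDerivAt (fun s => V (x s))
      (2 * ∑ i, p i * (v i * ((∑ j, A i j * v j) + d t i))) t := by
    have h1 : HasDerivAt (fun s => ∑ i, p i * (x s i - xs i - xs i * Real.log (x s i / xs i)))
        (∑ i, p i * (v i * ((∑ j, A i j * v j) + d t i))) t := by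
      apply HasDerivAt.fun_sum
      intro i _
      have hxne : x t i ≠ 0 := (hxpos t i).ne'
      have hxsne : xs i ≠ 0 := (hxs i).ne'
      have hdiv : HasDerivAt (fun s => x s i / xs i)
          ((x t i * (r i + ∑ j, A i j * x t j + d t i)) / xs i) t :=
        (hode t i).div_const (xs i)
      have hlog : HasDerivAt (fun s => Real.log (x s i / xs i))
          ((x t i * (r i + ∑ j, A i j * x t j + d t i)) / xs i / (x t i / xs i)) t :=
        hdiv.log (div_ne_zero hxne hxsne)
      have := (((hode t i).sub_const (xs i)).sub (hlog.const_mul (xs i))).const_mul (p i)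
      convert this using 1
      case e'_4 => rfl
      case e'_8 => rfl
      have hri : r i = -∑ j, A i j * xs j := by
        have := congrFun heq i
        simp [Matrix.mulVec, dotProduct] at this
        linarith
      field_simp
      rw [hri]
      simp only [hv]
      have hsum : ∑ j, A i j * (x t j - xs j)
          = (∑ j, A i j * x t j) - ∑ j, A i j * xs j := by
        rw [← Finset.sum_sub_distrib]
        exact Finset.sum_congr rfl fun j _ => by ring
      rw [hsum]; ring
    have := h1.const_mul (2 : ℝ)
    simpa [V] using this
  have hDeq : D = 2 * ∑ i, p i * (v i * ((∑ j, A i j * v j) + d t i)) :=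
    hD.unique hV'
  -- split into the quadratic and disturbance parts
  have hsplit : D = 2 * (∑ i, p i * (v i * ∑ j, A i j * v j))
      + 2 * (∑ i, p i * (v i * d t i)) := by
    rw [hDeq, ← mul_add, ← Finset.sum_add_distrib]
    congr 1
    refine Finset.sum_congr rfl fun i _ => by ring
  -- quadratic part
  have hdiag : ∀ w : Fin n → ℝ, (Matrix.diagonal p).mulVec w = fun i => p i * w i := by
    intro w; ext i; exact Matrix.mulVec_diagonal p w i
  have hquadeq : v ⬝ᵥ ((Aᵀ * Matrix.diagonal p + Matrix.diagonal p * A).mulVec v)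
      = 2 * ∑ i, p i * (v i * ∑ j, A i j * v j) := by
    simp only [Matrix.add_mulVec, dotProduct_add, ← Matrix.mulVec_mulVec, hdiag]
    rw [Matrix.dotProduct_mulVec v Aᵀ, Matrix.vecMul_transpose]
    simp only [dotProduct, Matrix.mulVec, dotProduct]
    rw [← Finset.sum_add_distrib, Finset.mul_sum]
    exact Finset.sum_congr rfl fun i _ => by ring
  have hquad : 2 * (∑ i, p i * (v i * ∑ j, A i j * v j)) ≤ -(qmin * ∑ i, (v i) ^ 2) := by
    have := hQ v
    rw [Matrix.neg_mulVec, dotProduct_neg, hquadeq] at this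
    linarith
  -- e t ^ 2 = ∑ v²
  have hsum_nonneg : (0:ℝ) ≤ ∑ i, (v i) ^ 2 := Finset.sum_nonneg fun i _ => sq_nonneg _
  have he2 : (e t) ^ 2 = ∑ i, (v i) ^ 2 := Real.sq_sqrt hsum_nonneg
  have he_nonneg : 0 ≤ e t := Real.sqrt_nonneg _
  -- pmax facts
  have hpmax_pos : 0 < pmax := by
    obtain ⟨i, _, hi⟩ := Finset.exists_mem_eq_sup' Finset.univ_nonempty p
    have h : pmax = p i := hi
    rw [h]; exact hp i
  have hple : ∀ i, p i ≤ pmax := fun i => Finset.le_sup' p (Finset.mem_univ i)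
  have hαd : 0 ≤ αd := le_trans (Real.sqrt_nonneg _) (hd t)
  -- disturbance part
  have hdist : (∑ i, p i * (v i * d t i)) ≤ pmax * (e t * αd) := by
    have h1 : (∑ i, p i * (v i * d t i)) ≤ ∑ i, pmax * (|v i| * |d t i|) := by
      refine Finset.sum_le_sum fun i _ => ?_
      have : v i * d t i ≤ |v i| * |d t i| := by
        rw [← abs_mul]; exact le_abs_self _
      have h2 : p i * (v i * d t i) ≤ p i * (|v i| * |d t i|) :=
        mul_le_mul_of_nonneg_left this (hp i).le
      have h3 : p i * (|v i| * |d t i|) ≤ pmax * (|v i| * |d t i|) :=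
        mul_le_mul_of_nonneg_right (hple i) (by positivity)
      linarith
    rw [← Finset.mul_sum] at h1
    have hcs : (∑ i, |v i| * |d t i|) ≤ e t * αd := by
      have := Real.sum_mul_le_sqrt_mul_sqrt Finset.univ (fun i => |v i|) (fun i => |d t i|)
      simp only [sq_abs] at this
      refine le_trans this ?_
      have h4 : Real.sqrt (∑ i, (d t i) ^ 2) ≤ αd := hd t
      exact mul_le_mul_of_nonneg_left h4 he_nonneg
    exact h1.trans (mul_le_mul_of_nonneg_left hcs hpmax_pos.le)
  have hbound : D ≤ -qmin * (e t) ^ 2 + 2 * pmax * e t * αd := by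
    rw [hsplit, he2]
    nlinarith [hquad, hdist]
  refine ⟨hbound, fun hgt => ?_⟩
  have h0 : 0 ≤ 2 * pmax * αd / qmin := by positivity
  have hepos : 0 < e t := lt_of_le_of_lt h0 hgt
  have hmul : 2 * pmax * αd < qmin * e t := by
    rw [gt_iff_lt, div_lt_iff₀ hqmin] at hgt
    linarith
  have : -qmin * (e t) ^ 2 + 2 * pmax * e t * αd < 0 := by nlinarith
  linarith
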